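/- arXiv:1808.09070 — 3 statements merged into one kernel-verified Lean document; each statement's English description precedes it below -/
import Mathlib

section
/- Let $\mathfrak{a}_1, \ldots, \mathfrak{a}_m$ be nonzero ideals in a commutative Noetherian ring $A$, and for each $p \ge 1$ set $\mathfrak{b}_p := \sum_{b} \mathfrak{a}_1^{b_1} \cdots \mathfrak{a}_m^{b_m}$, the sum over tuples $b \in \mathbb{N}^m$ with $\sum_{i=1}^m i\, b_i = p$. Then there exists a positive integer $N$ such that $\mathfrak{b}_{Np} = \mathfrak{b}_N^p$ for all positive integers $p$. -/
/-- The sequence of ideals `𝔟_p = ∑_{∑ i bᵢ = p} 𝔞₁^{b₁} ⋯ 𝔞ₘ^{bₘ}`. -/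
def bSeq {A : Type*} [CommRing A] {m : ℕ} (a : Fin m → Ideal A) (p : ℕ) : Ideal A :=
  ⨆ b ∈ {b : Fin m → ℕ | ∑ i : Fin m, ((i : ℕ) + 1) * b i = p}, ∏ i : Fin m, a i ^ b i

section Aux

variable {m : ℕ}

/-- degree of a monomial exponent vector -/
def bDeg {m : ℕ} (b : Fin m → ℕ) : ℕ := ∑ i : Fin m, ((i : ℕ) + 1) * b i

lemma bDeg_add (b c : Fin m → ℕ) : bDeg (fun i => b i + c i) = bDeg b + bDeg c := by
  simp [bDeg, mul_add, Finset.sum_add_distrib]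

lemma exists_big (L : ℕ) (hL : 0 < L) (b : Fin m → ℕ)
    (h : m * L < bDeg b) : ∃ i : Fin m, L ≤ ((i : ℕ) + 1) * b i := by
  by_contra hc
  push_neg at hc
  have h1 : bDeg b ≤ ∑ _i : Fin m, (L - 1) :=
    Finset.sum_le_sum fun i _ => Nat.le_sub_one_of_lt (hc i)
  simp only [Finset.sum_const, Finset.card_univ, Fintype.card_fin, smul_eq_mul] at h1
  have : m * (L - 1) ≤ m * L := Nat.mul_le_mul_left _ (Nat.sub_le _ _)
  omega

lemma bDeg_update (b : Fin m → ℕ) (i : Fin m) (v : ℕ) :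
    bDeg (Function.update b i v) = bDeg b - ((i : ℕ) + 1) * b i + ((i : ℕ) + 1) * v := by
  have key : ∀ x : Fin m, ((x : ℕ) + 1) * Function.update b i v x
      = Function.update (fun x : Fin m => ((x : ℕ) + 1) * b x) i (((i : ℕ) + 1) * v) x := by
    intro x
    rcases eq_or_ne x i with rfl | hx
    · simp
    · simp [Function.update_apply, hx]
  have h1 : bDeg (Function.update b i v)
      = (((i : ℕ) + 1) * v) + ∑ x ∈ Finset.univ \ {i}, ((x : ℕ) + 1) * b x := by
    simp only [bDeg, key]
    exact Finset.sum_update_of_mem (Finset.mem_univ i) _ _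
  have h2 : bDeg b = (((i : ℕ) + 1) * b i) + ∑ x ∈ Finset.univ \ {i}, ((x : ℕ) + 1) * b x :=
    Finset.sum_eq_add_sum_sdiff_singleton_of_mem (Finset.mem_univ i) _
  omega

lemma single_le_bDeg (b : Fin m → ℕ) (i : Fin m) : ((i : ℕ) + 1) * b i ≤ bDeg b :=
  Finset.single_le_sum (f := fun x : Fin m => ((x : ℕ) + 1) * b x)
    (fun x _ => Nat.zero_le _) (Finset.mem_univ i)

/-- Extract a sub-vector of degree exactly `k * m!` when the rest is large. -/
lemma chunk : ∀ (k : ℕ) (b : Fin m → ℕ) (R : ℕ),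
    bDeg b = k * m.factorial + R → m * m.factorial ≤ R →
    ∃ c : Fin m → ℕ, (∀ i, c i ≤ b i) ∧ bDeg c = k * m.factorial := by
  intro k
  induction k with
  | zero =>
    intro b R _ _
    exact ⟨fun _ => 0, fun i => Nat.zero_le _, by simp [bDeg]⟩
  | succ k IH =>
    intro b R hdeg hR
    have hL : 0 < m.factorial := m.factorial_pos
    have hbig : m * m.factorial < bDeg b := by
      have : m.factorial ≤ (k + 1) * m.factorial := Nat.le_mul_of_pos_left _ (Nat.succ_pos k)
      omega
    obtain ⟨i, hi⟩ := exists_big m.factorial hL b hbig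
    have hwd : ((i : ℕ) + 1) ∣ m.factorial := Nat.dvd_factorial (Nat.succ_pos _) i.isLt
    set t : ℕ := m.factorial / ((i : ℕ) + 1) with ht
    have hwt : ((i : ℕ) + 1) * t = m.factorial := Nat.mul_div_cancel' hwd
    have htb : t ≤ b i := by
      have := Nat.div_le_div_right (c := ((i : ℕ) + 1)) hi
      rw [Nat.mul_div_cancel_left _ (Nat.succ_pos _)] at this
      exact this
    have hsub : ((i : ℕ) + 1) * b i = ((i : ℕ) + 1) * (b i - t) + m.factorial := by
      have : b i = (b i - t) + t := (Nat.sub_add_cancel htb).symm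
      rw [← hwt]
      calc ((i : ℕ) + 1) * b i = ((i : ℕ) + 1) * ((b i - t) + t) := by rw [← this]
        _ = ((i : ℕ) + 1) * (b i - t) + ((i : ℕ) + 1) * t := by rw [Nat.mul_add]
    have hdegb' : bDeg (Function.update b i (b i - t)) = k * m.factorial + R := by
      rw [bDeg_update]
      have hwbi := single_le_bDeg b i
      have hk1 : (k + 1) * m.factorial = k * m.factorial + m.factorial := by ring
      omega
    obtain ⟨c', hc'le, hc'deg⟩ := IH (Function.update b i (b i - t)) R hdegb' hR
    refine ⟨Function.update c' i (c' i + t), ?_, ?_⟩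
    · intro j
      rcases eq_or_ne j i with rfl | hj
      · have := hc'le j
        simp only [Function.update_self] at this ⊢
        omega
      · have := hc'le j
        simp only [Function.update_apply, hj, if_false] at this ⊢
        exact this
    · rw [bDeg_update]
      have hwc : ((i : ℕ) + 1) * (c' i + t) = ((i : ℕ) + 1) * c' i + m.factorial := by
        rw [Nat.mul_add, hwt]
      have hwci := single_le_bDeg c' i
      have hk1 : (k + 1) * m.factorial = k * m.factorial + m.factorial := by ring
      omega

/-- split off one part of degree `N = (m+1) * m!` -/
lemma split (p : ℕ) (hp : 0 < p) (b : Fin m → ℕ)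
    (hb : bDeg b = ((m + 1) * m.factorial) * (p + 1)) :
    ∃ c d : Fin m → ℕ, (∀ i, b i = c i + d i) ∧
      bDeg c = (m + 1) * m.factorial ∧ bDeg d = ((m + 1) * m.factorial) * p := by
  set N := (m + 1) * m.factorial with hN
  have hdeg : bDeg b = (m + 1) * m.factorial + N * p := by
    rw [hb, hN]; ring
  have hR : m * m.factorial ≤ N * p := by
    calc m * m.factorial ≤ (m + 1) * m.factorial := Nat.mul_le_mul_right _ (by omega)
    _ = N * 1 := by rw [hN, mul_one]
    _ ≤ N * p := Nat.mul_le_mul_left _ hp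
  obtain ⟨c, hcle, hcdeg⟩ := chunk (m + 1) b (N * p) hdeg hR
  have hcN : bDeg c = N := by rw [hcdeg, hN]
  refine ⟨c, fun i => b i - c i, fun i => by have := hcle i; show b i = c i + (b i - c i); omega, hcN, ?_⟩
  have hadd : bDeg (fun i => c i + (b i - c i)) = bDeg c + bDeg (fun i => b i - c i) :=
    bDeg_add _ _
  have heq : (fun i => c i + (b i - c i)) = b := by
    funext i; have := hcle i; omega
  rw [heq, hb, hcN] at hadd
  have hNp : N * (p + 1) = N + N * p := by ring
  omega

end Aux

section Ideals

variable {A : Type*} [CommRing A] {m : ℕ} (a : Fin m → Ideal A)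

lemma prod_le_bSeq (b : Fin m → ℕ) (p : ℕ) (hb : bDeg b = p) :
    ∏ i : Fin m, a i ^ b i ≤ bSeq a p :=
  le_iSup₂ (f := fun (b : Fin m → ℕ)
    (_ : b ∈ {b : Fin m → ℕ | ∑ i : Fin m, ((i : ℕ) + 1) * b i = p}) => ∏ i : Fin m, a i ^ b i)
    b hb

lemma bSeq_mul_le (p q : ℕ) : bSeq a p * bSeq a q ≤ bSeq a (p + q) := by
  rw [bSeq, bSeq, Submodule.iSup_mul]
  refine iSup_le fun b => ?_
  rw [Submodule.iSup_mul]
  refine iSup_le fun hb => ?_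
  rw [Submodule.mul_iSup]
  refine iSup_le fun c => ?_
  rw [Submodule.mul_iSup]
  refine iSup_le fun hc => ?_
  have key : (∏ i : Fin m, a i ^ b i) * ∏ i : Fin m, a i ^ c i
      = ∏ i : Fin m, a i ^ (b i + c i) := by
    rw [← Finset.prod_mul_distrib]
    exact Finset.prod_congr rfl fun i _ => (pow_add _ _ _).symm
  rw [key]
  exact prod_le_bSeq a _ _ (by rw [bDeg_add b c]; exact congrArg₂ (· + ·) hb hc)

lemma prod_le_pow : ∀ (p : ℕ), 0 < p → ∀ b : Fin m → ℕ,
    bDeg b = ((m + 1) * m.factorial) * p →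
    ∏ i : Fin m, a i ^ b i ≤ bSeq a ((m + 1) * m.factorial) ^ p := by
  intro p
  induction p with
  | zero => intro h; omega
  | succ p IH =>
    intro _ b hb
    rcases Nat.eq_zero_or_pos p with rfl | hp
    · rw [pow_one]
      exact prod_le_bSeq a b _ (by simpa using hb)
    · obtain ⟨c, d, hbcd, hc, hd⟩ := split p hp b hb
      have hsplit : ∏ i : Fin m, a i ^ b i
          = (∏ i : Fin m, a i ^ c i) * ∏ i : Fin m, a i ^ d i := by
        rw [← Finset.prod_mul_distrib]
        exact Finset.prod_congr rfl fun i _ => by rw [hbcd i, pow_add]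
      rw [hsplit, pow_succ']
      exact Ideal.mul_mono (prod_le_bSeq a c _ hc) (IH hp d hd)

end Ideals

/-- In a Noetherian ring, there exists `N > 0` with `𝔟_{Np} = 𝔟_N ^ p` for all `p > 0`. -/
theorem stmt2 {A : Type*} [CommRing A] [IsNoetherianRing A] {m : ℕ}
    (a : Fin m → Ideal A) (ha : ∀ i, a i ≠ ⊥) :
    ∃ N : ℕ, 0 < N ∧ ∀ p : ℕ, 0 < p → bSeq a (N * p) = bSeq a N ^ p := by
  refine ⟨(m + 1) * m.factorial, Nat.mul_pos (Nat.succ_pos m) m.factorial_pos, fun p hp => ?_⟩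
  apply le_antisymm
  · refine iSup₂_le fun b hb => ?_
    exact prod_le_pow a p hp b hb
  · clear hp
    induction p with
    | zero =>
      rw [pow_zero, mul_zero]
      have h := prod_le_bSeq a (fun _ => 0) 0 (by simp [bDeg])
      simp only [pow_zero, Finset.prod_const_one] at h
      exact h
    | succ p IH =>
      calc bSeq a ((m + 1) * m.factorial) ^ (p + 1)
          = bSeq a ((m + 1) * m.factorial) ^ p * bSeq a ((m + 1) * m.factorial) := pow_succ _ _
        _ ≤ bSeq a ((m + 1) * m.factorial * p) * bSeq a ((m + 1) * m.factorial) :=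
            Ideal.mul_mono IH le_rfl
        _ ≤ bSeq a ((m + 1) * m.factorial * p + (m + 1) * m.factorial) := bSeq_mul_le a _ _
        _ = bSeq a ((m + 1) * m.factorial * (p + 1)) := by
            rw [show (m + 1) * m.factorial * p + (m + 1) * m.factorial
              = (m + 1) * m.factorial * (p + 1) from by ring]
end

section
/- Let $A \to B$ be a flat morphism of Noetherian commutative rings, let $I \subseteq B$ be an ideal, and let $M$ be an $A$-module. If the associated graded ring $\mathrm{gr}_I B = \bigoplus_{m \ge 0} I^m/I^{m+1}$ is flat over $A$, then for each $m \ge 0$: (1) $I^m$, viewed as a $B$-module (hence as an $A$-module), is flat over $A$; and (2) the natural map $I^m \otimes_A M \to B \otimes_A M$ is injective. -/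
open TensorProduct LinearMap

set_option maxHeartbeats 1000000

/-- Diagram chase: if the cokernel of an injection is flat, tensoring with any
module `M` admitting a flat cover preserves the injection. -/
lemma aux_chase {R : Type*} [CommRing R]
    {N' N Q : Type*} [AddCommGroup N'] [AddCommGroup N] [AddCommGroup Q]
    [Module R N'] [Module R N] [Module R Q]
    (f : N' →ₗ[R] N) (g : N →ₗ[R] Q) (hf : Function.Injective f)
    (hg : Function.Surjective g) (hfg : Function.Exact f g) [Module.Flat R Q]
    (M : Type*) [AddCommGroup M] [Module R M]
    (F : Type*) [AddCommGroup F] [Module R F] [Module.Flat R F]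
    (p : F →ₗ[R] M) (hp : Function.Surjective p) :
    Function.Injective (LinearMap.rTensor M f) := by
  rw [← LinearMap.ker_eq_bot, eq_bot_iff]
  intro x hx
  rw [LinearMap.mem_ker] at hx
  set i : LinearMap.ker p →ₗ[R] F := (LinearMap.ker p).subtype with hi_def
  have hip : Function.Exact i p := LinearMap.exact_subtype_ker_map p
  obtain ⟨y, hy⟩ := LinearMap.lTensor_surjective N' hp x
  set y' := LinearMap.rTensor F f y with hy'
  have sq1 : (LinearMap.lTensor N p).comp (LinearMap.rTensor F f)
      = (LinearMap.rTensor M f).comp (LinearMap.lTensor N' p) := by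
    apply TensorProduct.ext'; intro a b; simp
  have h1 : LinearMap.lTensor N p y' = 0 := by
    have := congrArg (fun φ => φ y) sq1
    simp only [LinearMap.comp_apply] at this
    rw [hy', this, hy, hx]
  have hexN : Function.Exact (LinearMap.lTensor N i) (LinearMap.lTensor N p) :=
    lTensor_exact N hip hp
  obtain ⟨z, hz⟩ := (hexN y').mp h1
  have sq2 : (LinearMap.lTensor Q i).comp (LinearMap.rTensor (LinearMap.ker p) g)
      = (LinearMap.rTensor F g).comp (LinearMap.lTensor N i) := by
    apply TensorProduct.ext'; intro a b; simp
  have hgf : g.comp f = 0 := LinearMap.ext fun a => hfg.apply_apply_eq_zero a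
  have h2 : LinearMap.lTensor Q i (LinearMap.rTensor (LinearMap.ker p) g z) = 0 := by
    have := congrArg (fun φ => φ z) sq2
    simp only [LinearMap.comp_apply] at this
    rw [this, hz, hy', ← LinearMap.comp_apply, ← LinearMap.rTensor_comp, hgf]
    simp
  have h3 : LinearMap.rTensor (LinearMap.ker p) g z = 0 :=
    Module.Flat.lTensor_preserves_injective_linearMap i
      (Submodule.injective_subtype _) (by rw [h2, map_zero])
  have hexK : Function.Exact (LinearMap.rTensor (LinearMap.ker p) f)
      (LinearMap.rTensor (LinearMap.ker p) g) := rTensor_exact (LinearMap.ker p) hfg hg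
  obtain ⟨w, hw⟩ := (hexK z).mp h3
  have sq3 : (LinearMap.rTensor F f).comp (LinearMap.lTensor N' i)
      = (LinearMap.lTensor N i).comp (LinearMap.rTensor (LinearMap.ker p) f) := by
    apply TensorProduct.ext'; intro a b; simp
  have h4 : LinearMap.rTensor F f (LinearMap.lTensor N' i w) = y' := by
    have := congrArg (fun φ => φ w) sq3
    simp only [LinearMap.comp_apply] at this
    rw [this, hw, hz]
  have h5 : LinearMap.lTensor N' i w = y :=
    Module.Flat.rTensor_preserves_injective_linearMap f hf (by rw [h4, hy'])
  have hpi : p.comp i = 0 := LinearMap.ext fun k => k.2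
  have : x = 0 := by
    rw [← hy, ← h5, ← LinearMap.comp_apply, ← LinearMap.lTensor_comp, hpi]
    simp
  simp [this]

/-- If the cokernel of an injection is flat, tensoring preserves the injection. -/
lemma aux_rTensor_injective {R : Type*} [CommRing R]
    {N' N Q : Type*} [AddCommGroup N'] [AddCommGroup N] [AddCommGroup Q]
    [Module R N'] [Module R N] [Module R Q]
    (f : N' →ₗ[R] N) (g : N →ₗ[R] Q) (hf : Function.Injective f)
    (hg : Function.Surjective g) (hfg : Function.Exact f g) [Module.Flat R Q]
    (M : Type*) [AddCommGroup M] [Module R M] :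
    Function.Injective (LinearMap.rTensor M f) := by
  refine aux_chase f g hf hg hfg M (M →₀ R) (Finsupp.linearCombination R (id : M → M)) ?_
  intro m
  exact ⟨Finsupp.single m 1, by rw [Finsupp.linearCombination_single, one_smul]; rfl⟩

lemma aux_lTensor_injective {R : Type*} [CommRing R]
    {N' N Q : Type*} [AddCommGroup N'] [AddCommGroup N] [AddCommGroup Q]
    [Module R N'] [Module R N] [Module R Q]
    (f : N' →ₗ[R] N) (g : N →ₗ[R] Q) (hf : Function.Injective f)
    (hg : Function.Surjective g) (hfg : Function.Exact f g) [Module.Flat R Q]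
    (M : Type*) [AddCommGroup M] [Module R M] :
    Function.Injective (LinearMap.lTensor M f) := by
  have heq : LinearMap.lTensor M f =
      (TensorProduct.comm R N M).toLinearMap ∘ₗ
        (LinearMap.rTensor M f) ∘ₗ (TensorProduct.comm R M N').toLinearMap := by
    apply TensorProduct.ext'; intro a b; simp
  rw [heq]
  exact (TensorProduct.comm R N M).injective.comp
    ((aux_rTensor_injective f g hf hg hfg M).comp (TensorProduct.comm R M N').injective)

/-- If `A → B` is flat between Noetherian rings, `I ⊆ B` an ideal with `gr_I B`
flat over `A` (i.e. each `Iᵐ/Iᵐ⁺¹` is `A`-flat), then each `Iᵐ` is `A`-flat and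
`Iᵐ ⊗_A M → B ⊗_A M` is injective for any `A`-module `M`. -/
theorem stmt3 (A B : Type*) [CommRing A] [CommRing B]
    [IsNoetherianRing A] [IsNoetherianRing B]
    [Algebra A B] [Module.Flat A B] (I : Ideal B)
    (M : Type*) [AddCommGroup M] [Module A M]
    (hgr : ∀ m : ℕ, Module.Flat A
      (↥((I ^ m).restrictScalars A) ⧸
        (((I ^ (m + 1)).restrictScalars A).comap ((I ^ m).restrictScalars A).subtype))) :
    ∀ m : ℕ, Module.Flat A ↥((I ^ m).restrictScalars A) ∧
      Function.Injective (LinearMap.rTensor M ((I ^ m).restrictScalars A).subtype) := by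
  intro m
  induction m with
  | zero =>
    have h0 : (I ^ 0).restrictScalars A = ⊤ := by
      simp [pow_zero, Ideal.one_eq_top]
    rw [h0]
    constructor
    · exact Module.Flat.of_linearEquiv Submodule.topEquiv
    · have : LinearMap.rTensor M (⊤ : Submodule A B).subtype =
          (TensorProduct.congr (Submodule.topEquiv (R := A) (M := B))
            (LinearEquiv.refl A M)).toLinearMap := by
        apply TensorProduct.ext'; intro a b; simp
      rw [this]
      exact (TensorProduct.congr _ _).injective
  | succ m ih =>
    obtain ⟨ihflat, ihinj⟩ := ih
    set Nm := (I ^ m).restrictScalars A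
    set Nm1 := (I ^ (m + 1)).restrictScalars A
    have hle : Nm1 ≤ Nm := fun x hx =>
      Ideal.pow_le_pow_right (Nat.le_succ m) hx
    set K : Submodule A Nm := Nm1.comap Nm.subtype
    set f : Nm1 →ₗ[A] Nm := Submodule.inclusion hle
    have hf : Function.Injective f := Submodule.inclusion_injective hle
    have hrange : LinearMap.range f = K := Submodule.range_inclusion Nm1 Nm hle
    set g : Nm →ₗ[A] (Nm ⧸ K) := K.mkQ
    have hg : Function.Surjective g := Submodule.mkQ_surjective K
    have hfg : Function.Exact f g := by
      rw [LinearMap.exact_iff, Submodule.ker_mkQ, hrange]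
    have hQ : Module.Flat A (Nm ⧸ K) := hgr m
    have hcomp : Nm.subtype.comp f = Nm1.subtype :=
      Submodule.subtype_comp_inclusion _ _ hle
    constructor
    · rw [Module.Flat.iff_rTensor_injective']
      intro J
      have sq : (LinearMap.lTensor A f).comp (LinearMap.rTensor Nm1 J.subtype)
          = (LinearMap.rTensor Nm J.subtype).comp (LinearMap.lTensor (↥J) f) := by
        apply TensorProduct.ext'; intro a b; simp
      have hinj1 : Function.Injective (LinearMap.lTensor (↥J) f) :=
        aux_lTensor_injective f g hf hg hfg J
      have hinj2 : Function.Injective (LinearMap.rTensor Nm J.subtype) :=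
        Module.Flat.iff_rTensor_injective'.mp ihflat J
      have : Function.Injective
          ((LinearMap.lTensor A f).comp (LinearMap.rTensor Nm1 J.subtype)) := by
        rw [sq]; exact hinj2.comp hinj1
      intro a b hab
      exact this (by simp only [LinearMap.comp_apply, hab])
    · have : LinearMap.rTensor M Nm1.subtype
          = (LinearMap.rTensor M Nm.subtype).comp (LinearMap.rTensor M f) := by
        rw [← LinearMap.rTensor_comp, hcomp]
      rw [this]
      exact ihinj.comp (aux_rTensor_injective f g hf hg hfg M)
end

section
/- Let $P \subset \mathbb{R}^n$ be a compact convex polytope with nonempty interior containing the origin in its interior, defined by finitely many inequalities $\langle u, v_i \rangle \ge -c_i$ with $c_i > 0$ ($1 \le i \le d$, $v_i \ne 0$), and let $\overline{u}$ be a point in the interior of $P$ with $\overline{u} \ne 0$. Let $c$ be the largest real number such that $-c\overline{u} \in P$. Then $c > 0$, and the quantity $\min_{1 \le i \le d} \frac{c_i}{c_i + \langle \overline{u}, v_i \rangle}$ equals $\frac{c}{1+c}$, provided every facet inequality is attained, i.e. for each $i$ there is a point of $P$ with $\langle u, v_i\rangle = -c_i$. In particular this minimum lies in $(0,1)$. 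-/
/-- Toric computation of the stability threshold: for a compact polytope
`P = {u | ⟨u, vᵢ⟩ ≥ -cᵢ}` with `0` in its interior, an interior point `ū ≠ 0`,
and `c` the largest real with `-cū ∈ P`, if every facet inequality is attained
then `minᵢ cᵢ/(cᵢ + ⟨ū, vᵢ⟩) = c/(1+c) ∈ (0,1)`. -/
theorem stmt10 (n d : ℕ) (hd : 0 < d)
    (v : Fin d → EuclideanSpace ℝ (Fin n)) (hv : ∀ i, v i ≠ 0)
    (c : Fin d → ℝ) (hc : ∀ i, 0 < c i)
    (P : Set (EuclideanSpace ℝ (Fin n)))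
    (hP : P = {u | ∀ i, -(c i) ≤ (inner ℝ u (v i) : ℝ)})
    (hcomp : IsCompact P)
    (h0 : (0 : EuclideanSpace ℝ (Fin n)) ∈ interior P)
    (u₀ : EuclideanSpace ℝ (Fin n)) (hu₀ : u₀ ∈ interior P) (hu₀ne : u₀ ≠ 0)
    (C : ℝ) (hC : IsGreatest {t : ℝ | -(t • u₀) ∈ P} C)
    (hfacet : ∀ i, ∃ u ∈ P, (inner ℝ u (v i) : ℝ) = -(c i)) :
    0 < C ∧
    Finset.univ.inf' ⟨⟨0, hd⟩, Finset.mem_univ _⟩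
      (fun i => c i / (c i + (inner ℝ u₀ (v i) : ℝ))) = C / (1 + C) ∧
    0 < C / (1 + C) ∧ C / (1 + C) < 1 := by
  set a : Fin d → ℝ := fun i => (inner ℝ u₀ (v i) : ℝ) with ha
  -- interior points satisfy strict inequalities
  have hstrict : ∀ (w : EuclideanSpace ℝ (Fin n)), w ∈ interior P →
      ∀ i, -(c i) < (inner ℝ w (v i) : ℝ) := by
    intro w hw i
    obtain ⟨ε, hε, hball⟩ := Metric.isOpen_iff.mp isOpen_interior w hw
    have hvn : (0:ℝ) < ‖v i‖ := norm_pos_iff.mpr (hv i)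
    set r : ℝ := ε / (2 * ‖v i‖) with hr
    have hrpos : 0 < r := by positivity
    have hdist : dist (w - r • v i) w = ε / 2 := by
      rw [dist_eq_norm]
      have : w - r • v i - w = -(r • v i) := by abel
      rw [this, norm_neg, norm_smul, Real.norm_eq_abs, abs_of_pos hrpos, hr]
      field_simp
    have hmem : w - r • v i ∈ P := by
      apply interior_subset
      apply hball
      rw [Metric.mem_ball, hdist]
      linarith
    have hineq := (hP ▸ hmem) i
    rw [inner_sub_left, real_inner_smul_left, real_inner_self_eq_norm_sq] at hineq
    nlinarith [hineq, mul_pos hrpos (mul_pos hvn hvn)]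
  have hinner : ∀ (t : ℝ) (i : Fin d), (inner ℝ (-(t • u₀)) (v i) : ℝ) = -(t * a i) := by
    intro t i
    rw [inner_neg_left, real_inner_smul_left]
  -- membership of C
  have hCm : ∀ i, C * a i ≤ c i := by
    intro i
    have := (hP ▸ hC.1) i
    rw [hinner C i] at this
    linarith
  -- C > 0
  have hCpos : 0 < C := by
    obtain ⟨ε, hε, hball⟩ := Metric.isOpen_iff.mp isOpen_interior 0 h0
    have hun : (0:ℝ) < ‖u₀‖ := norm_pos_iff.mpr hu₀ne
    set t : ℝ := ε / (2 * ‖u₀‖) with ht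
    have htpos : 0 < t := by positivity
    have hmem : -(t • u₀) ∈ P := by
      apply interior_subset
      apply hball
      rw [Metric.mem_ball, dist_eq_norm, sub_zero, norm_neg, norm_smul,
        Real.norm_eq_abs, abs_of_pos htpos, ht]
      have heq : ε / (2 * ‖u₀‖) * ‖u₀‖ = ε / 2 := by field_simp
      rw [heq]
      linarith
    exact lt_of_lt_of_le htpos (hC.2 hmem)
  -- equality for some i
  have hex : ∃ i, C * a i = c i := by
    by_contra hne
    push_neg at hne
    have hlt : ∀ i, C * a i < c i := fun i => lt_of_le_of_ne (hCm i) (hne i)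
    set ε : ℝ := Finset.univ.inf' ⟨⟨0, hd⟩, Finset.mem_univ _⟩
      (fun i => (c i - C * a i) / (|a i| + 1)) with hε
    have hεpos : 0 < ε := by
      rw [hε]; refine (Finset.lt_inf'_iff ..).mpr ?_
      intro i _
      apply div_pos (by linarith [hlt i]) (by positivity)
    have hmem : (C + ε) ∈ {t : ℝ | -(t • u₀) ∈ P} := by
      show -((C + ε) • u₀) ∈ P
      rw [hP]
      intro i
      show -(c i) ≤ (inner ℝ (-((C + ε) • u₀)) (v i) : ℝ)
      rw [hinner (C + ε) i]
      have hεle : ε ≤ (c i - C * a i) / (|a i| + 1) :=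
        Finset.inf'_le _ (Finset.mem_univ i)
      have habs : (0:ℝ) < |a i| + 1 := by positivity
      have h2 : ε * (|a i| + 1) ≤ c i - C * a i := by
        rw [← le_div_iff₀ habs]; exact hεle
      have h3 : a i ≤ |a i| := le_abs_self _
      have h4 : ε * a i ≤ ε * |a i| := by
        apply mul_le_mul_of_nonneg_left h3 (le_of_lt hεpos)
      nlinarith [hc i]
    have := hC.2 hmem
    linarith
  obtain ⟨i₀, hi₀⟩ := hex
  have hai₀ : 0 < a i₀ := by nlinarith [hc i₀]
  have hden : ∀ i, 0 < c i + a i := by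
    intro i
    have := hstrict u₀ hu₀ i
    change -(c i) < a i at this
    linarith
  have h1C : (0:ℝ) < 1 + C := by linarith
  refine ⟨hCpos, ?_, div_pos hCpos h1C, ?_⟩
  · apply le_antisymm
    · calc Finset.univ.inf' ⟨⟨0, hd⟩, Finset.mem_univ _⟩
            (fun i => c i / (c i + a i)) ≤ c i₀ / (c i₀ + a i₀) :=
            Finset.inf'_le _ (Finset.mem_univ i₀)
        _ = C / (1 + C) := by
            rw [← hi₀, div_eq_div_iff (by nlinarith : (0:ℝ) < C * a i₀ + a i₀).ne' h1C.ne']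
            ring
    · apply Finset.le_inf'
      intro i _
      rw [div_le_div_iff₀ h1C (hden i)]
      nlinarith [hCm i]
  · rw [div_lt_one h1C]
    linarith
end
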